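/- Exceptional untwisted reflection formula for G₂: in the root system G₂, let α be the short positive root α₁ + α₂ or the short positive root 2α₁ + α₂, and let λ be a dominant weight. Write (λ, α∨) = 3k + r with k ∈ ℤ≥0 and r ∈ {0,1,2}. Then the minimal number of positive roots of G₂ (with repetitions) summing to λ − s_α(λ) = (λ,α∨)·α equals 2k + r. -/

import Mathlib

/-- The `G₂` inner product on the root lattice `ℤ²` spanned by the simple roots
`α₁ = (1,0)` (short) and `α₂ = (0,1)` (long): it is determined by
`(α₁,α₁) = 2`, `(α₂,α₂) = 6`, `(α₁,α₂) = -3`. -/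
def g2Form (x y : ℤ × ℤ) : ℤ :=
  2 * x.1 * y.1 + 6 * x.2 * y.2 - 3 * (x.1 * y.2 + x.2 * y.1)

/-- The positive roots of `G₂` in the basis of simple roots. -/
def g2PositiveRoots : Set (ℤ × ℤ) :=
  {(1, 0), (0, 1), (1, 1), (2, 1), (3, 1), (3, 2)}

/-- The set of lengths of decompositions of `v` into a sum of positive roots of
`G₂` (with repetitions). -/
def g2DecompLengths (v : ℤ × ℤ) : Set ℕ :=
  {N | ∃ l : List (ℤ × ℤ),
    (∀ u ∈ l, u ∈ g2PositiveRoots) ∧ l.sum = v ∧ l.length = N}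

/-- Linear lower bounds: the functionals `x` and `-x + 3y` are at most `3` on
every positive root, hence at most `3 · length` on a sum of positive roots. -/
lemma g2_sum_bounds (l : List (ℤ × ℤ)) (h : ∀ u ∈ l, u ∈ g2PositiveRoots) :
    l.sum.1 ≤ 3 * (l.length : ℤ) ∧ 3 * l.sum.2 - l.sum.1 ≤ 3 * (l.length : ℤ) := by
  induction l with
  | nil => simp
  | cons u t ih =>
    have hu := h u List.mem_cons_self
    have ht := ih (fun x hx => h x (List.mem_cons_of_mem u hx))
    simp only [List.sum_cons, List.length_cons, Prod.fst_add, Prod.snd_add]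
    simp only [g2PositiveRoots, Set.mem_insert_iff, Set.mem_singleton_iff] at hu
    rcases hu with h|h|h|h|h|h <;> subst h <;> push_cast <;> simp <;> omega

theorem g2_exceptional_reflection_formula
    (lam : ℤ × ℤ)
    (hdom1 : 0 ≤ g2Form lam (1, 0))
    (hdom2 : ∃ m : ℕ, g2Form lam (0, 1) = 3 * (m : ℤ))
    (α : ℤ × ℤ) (hα : α = (1, 1) ∨ α = (2, 1))
    (k r : ℕ) (hr : r < 3)
    (hkr : g2Form lam α = 3 * (k : ℤ) + (r : ℤ)) :
    IsLeast (g2DecompLengths ((g2Form lam α) • α)) (2 * k + r) := by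
  rw [hkr]
  obtain rfl | rfl := hα
  · constructor
    · refine ⟨List.replicate k (3,2) ++ List.replicate k (0,1) ++ List.replicate r (1,1),
        ?_, ?_, ?_⟩
      · intro u hu
        simp only [List.mem_append, List.mem_replicate] at hu
        rcases hu with (⟨_, rfl⟩|⟨_, rfl⟩)|⟨_, rfl⟩ <;>
          simp [g2PositiveRoots]
      · simp [List.sum_replicate, Prod.ext_iff, Prod.smul_def]
        constructor <;> ring
      · simp; ring
    · rintro N ⟨l, hl, hsum, rfl⟩
      have hb := (g2_sum_bounds l hl).2
      have h2 : l.sum.2 = 3 * (k : ℤ) + r := by rw [hsum]; simp [Prod.smul_def]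
      have h1 : l.sum.1 = 3 * (k : ℤ) + r := by rw [hsum]; simp [Prod.smul_def]
      rw [h1, h2] at hb
      omega
  · constructor
    · refine ⟨List.replicate k (3,1) ++ List.replicate k (3,2) ++ List.replicate r (2,1),
        ?_, ?_, ?_⟩
      · intro u hu
        simp only [List.mem_append, List.mem_replicate] at hu
        rcases hu with (⟨_, rfl⟩|⟨_, rfl⟩)|⟨_, rfl⟩ <;>
          simp [g2PositiveRoots]
      · simp [List.sum_replicate, Prod.ext_iff, Prod.smul_def]
        constructor <;> ring
      · simp; ring
    · rintro N ⟨l, hl, hsum, rfl⟩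
      have hb := (g2_sum_bounds l hl).1
      have h1 : l.sum.1 = (3 * (k : ℤ) + r) * 2 := by rw [hsum]; simp [Prod.smul_def]
      rw [h1] at hb
      omega
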